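/- Iterated dissipation bounds: if {E_k}_{k≥0} satisfies E_0 has volume m_0 and each E_k minimizes F^h(·,E_{k-1}), then for all k ≥ 1: (a) C_β(E_k) + (1/√h)||E_k| - m_0| ≤ P(E_0), and (b) Σ_{s=1}^k (1/h)∫_{E_sΔE_{s-1}} d_{E_{s-1}} dx ≤ P(E_0). -/

import Mathlib

open MeasureTheory Set Metric
open scoped Classical

/-- Iterated dissipation bounds: if `E 0` has volume `m_0` and each `E k` (`k ≥ 1`)
minimizes `F^h(·, E (k-1))`, then for all `k ≥ 1`:
(a) `C_β(E_k) + (1/√h)||E_k|-m_0| ≤ P(E_0)`, and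
(b) `Σ_{s=1}^k (1/h)∫_{E_sΔE_{s-1}} d_{E_{s-1}} dx ≤ P(E_0)`. -/
theorem stmt3 (d : ℕ) (h m0 κ : ℝ) (hh : h ∈ Set.Ioo (0:ℝ) 1)
    (hκ : κ ∈ Set.Ioc (0:ℝ) (1/2)) (hm0 : 0 < m0)
    (P Cβ : Set (EuclideanSpace ℝ (Fin (d+1))) → ℝ)
    (hcoer : ∀ G, κ * P G ≤ Cβ G ∧ Cβ G ≤ P G)
    (dA : Set (EuclideanSpace ℝ (Fin (d+1))) → EuclideanSpace ℝ (Fin (d+1)) → ℝ)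
    (hdA : ∀ G x, dA G x = if x ∈ G then Metric.infDist x Gᶜ else Metric.infDist x G)
    (E : ℕ → Set (EuclideanSpace ℝ (Fin (d+1))))
    (hvol0 : (volume (E 0)).toReal = m0)
    (Fh : Set (EuclideanSpace ℝ (Fin (d+1))) → Set (EuclideanSpace ℝ (Fin (d+1))) → ℝ)
    (hFh : ∀ G F, Fh G F = Cβ G + (1/h) * (∫ x in symmDiff G F, dA F x)
        + (1/Real.sqrt h) * |(volume G).toReal - m0|)
    (hmin : ∀ k : ℕ, 1 ≤ k → ∀ G, Fh (E k) (E (k-1)) ≤ Fh G (E (k-1))) :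
    ∀ k : ℕ, 1 ≤ k →
      (Cβ (E k) + (1/Real.sqrt h) * |(volume (E k)).toReal - m0| ≤ P (E 0)) ∧
      (∑ s ∈ Finset.Icc 1 k, (1/h) * (∫ x in symmDiff (E s) (E (s-1)), dA (E (s-1)) x)
        ≤ P (E 0)) := by
  obtain ⟨hh0, hh1⟩ := hh
  obtain ⟨hκ0, hκ2⟩ := hκ
  have hPnn : ∀ G, 0 ≤ P G := by
    intro G
    have h1 := (hcoer G).1
    have h2 := (hcoer G).2
    nlinarith
  have hCnn : ∀ G, 0 ≤ Cβ G := fun G =>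
    le_trans (mul_nonneg hκ0.le (hPnn G)) (hcoer G).1
  have hsqrt : 0 ≤ 1 / Real.sqrt h := by positivity
  set D : ℕ → ℝ := fun s =>
    (1/h) * (∫ x in symmDiff (E s) (E (s-1)), dA (E (s-1)) x) with hD
  set a : ℕ → ℝ := fun k =>
    Cβ (E k) + (1/Real.sqrt h) * |(volume (E k)).toReal - m0| with ha
  have hDnn : ∀ s, 0 ≤ D s := by
    intro s
    apply mul_nonneg (by positivity)
    apply integral_nonneg
    intro x
    rw [hdA]
    split_ifs <;> exact Metric.infDist_nonneg
  have hann : ∀ k, 0 ≤ a k := fun k =>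
    add_nonneg (hCnn _) (mul_nonneg hsqrt (abs_nonneg _))
  have hstep : ∀ k : ℕ, 1 ≤ k → a k + D k ≤ a (k-1) := by
    intro k hk
    have := hmin k hk (E (k-1))
    rw [hFh, hFh] at this
    simp only [symmDiff_self, Set.bot_eq_empty, MeasureTheory.setIntegral_empty,
      mul_zero, add_zero] at this
    simp only [ha, hD]
    linarith
  have hkey : ∀ k : ℕ, a k + ∑ s ∈ Finset.Icc 1 k, D s ≤ a 0 := by
    intro k
    induction k with
    | zero => simp
    | succ n ih =>
      rw [Finset.sum_Icc_succ_top (by omega : 1 ≤ n + 1)]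
      have := hstep (n+1) (by omega)
      simp only [Nat.add_sub_cancel] at this
      linarith
  have ha0 : a 0 = Cβ (E 0) := by
    simp [ha, hvol0]
  have ha0P : a 0 ≤ P (E 0) := ha0 ▸ (hcoer (E 0)).2
  intro k hk
  have hsum : 0 ≤ ∑ s ∈ Finset.Icc 1 k, D s :=
    Finset.sum_nonneg fun s _ => hDnn s
  have := hkey k
  constructor
  · have : a k ≤ P (E 0) := by linarith
    simpa [ha] using this
  · have : ∑ s ∈ Finset.Icc 1 k, D s ≤ P (E 0) := by
      have := hann k; linarith
    simpa [hD] using this
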